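/- In the rational Lanczos method, the residuals r_n = 𝒜x_n − b of the normal equations satisfy: r_n is orthogonal to the whole space 𝒦ℛⁿ; moreover ⟨rᵢ, rⱼ⟩ = 0 whenever |i−j| ≥ 2, and additionally ⟨r_n, r_{n+1}⟩ = 0 when n is even. -/

import Mathlib

/-- In the rational Lanczos method (q₁,…,q_N orthonormal basis from the
mixed rational Arnoldi process, with pentadiagonal T_{ij}=⟨qᵢ,𝒜qⱼ⟩ and iterates
x_n = Q_n c_n, T_n c_n = ‖b‖e₁), the residuals r_n = 𝒜x_n − b of the normal equations
satisfy: r_n ⟂ 𝒦ℛⁿ = span{q₁,…,q_n}; ⟨rᵢ,rⱼ⟩ = 0 whenever |i−j| ≥ 2; and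
⟨r_n, r_{n+1}⟩ = 0 when n is even (a rational step). -/
theorem stmt_16 {X : Type*} [NormedAddCommGroup X] [InnerProductSpace ℝ X]
    [FiniteDimensional ℝ X]
    (𝒜 : Module.End ℝ X) (hsym : ∀ x y : X, (inner ℝ (𝒜 x) y : ℝ) = inner ℝ x (𝒜 y))
    (hpsd : ∀ x : X, 0 ≤ (inner ℝ (𝒜 x) x : ℝ))
    (b : X) (hb : b ≠ 0) (N : ℕ) (q : ℕ → X)
    (hq1 : q 1 = ‖b‖⁻¹ • b)
    (hON : ∀ i j, 1 ≤ i → i ≤ N → 1 ≤ j → j ≤ N →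
      (inner ℝ (q i) (q j) : ℝ) = if i = j then 1 else 0)
    (hspan : Submodule.span ℝ {v : X | ∃ i, 1 ≤ i ∧ i ≤ N ∧ v = q i} = ⊤)
    (hpent1 : ∀ k m, 1 ≤ k → 2 * k ≤ N → 2 * k + 2 ≤ m → m ≤ N →
      (inner ℝ (q m) (𝒜 (q (2 * k))) : ℝ) = 0)
    (hpent2 : ∀ k m, 2 * k + 1 ≤ N → 2 * k + 3 ≤ m → m ≤ N →
      (inner ℝ (q m) (𝒜 (q (2 * k + 1))) : ℝ) = 0)
    (x : ℕ → X)
    (hx : ∀ n, 1 ≤ n → n ≤ N → ∃ cn : Fin n → ℝ,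
      (∀ i : Fin n, ∑ j : Fin n,
          (inner ℝ (q ((i : ℕ) + 1)) (𝒜 (q ((j : ℕ) + 1))) : ℝ) * cn j =
        if (i : ℕ) = 0 then ‖b‖ else 0) ∧
      x n = ∑ j : Fin n, cn j • q ((j : ℕ) + 1))
    (r : ℕ → X) (hr : ∀ n, r n = 𝒜 (x n) - b) :
    (∀ n, 1 ≤ n → n ≤ N → ∀ j, 1 ≤ j → j ≤ n → (inner ℝ (r n) (q j) : ℝ) = 0) ∧
    (∀ i j, 1 ≤ i → i ≤ N → 1 ≤ j → j ≤ N → i + 2 ≤ j →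
      (inner ℝ (r i) (r j) : ℝ) = 0) ∧
    (∀ n, Even n → 1 ≤ n → n + 1 ≤ N → (inner ℝ (r n) (r (n + 1)) : ℝ) = 0) := by

  -- basic facts
  have hbnorm : ‖b‖ ≠ 0 := norm_ne_zero_iff.mpr hb
  have hbq : b = ‖b‖ • q 1 := by
    rw [hq1, smul_smul, mul_inv_cancel₀ hbnorm, one_smul]
  -- inner ℝ of b with q j
  have hbqj : ∀ j, 1 ≤ j → j ≤ N → (inner ℝ b (q j) : ℝ) = if j = 1 then ‖b‖ else 0 := by
    intro j hj1 hjN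
    have h1 : (inner ℝ b (q j) : ℝ) = ‖b‖ * (inner ℝ (q 1) (q j) : ℝ) := by
      conv_lhs => rw [hbq]
      rw [real_inner_smul_left]
    rw [h1, hON 1 j le_rfl (le_trans hj1 hjN) hj1 hjN]
    rcases eq_or_ne j 1 with h | h
    · subst h; simp
    · rw [if_neg (fun e => h e.symm), if_neg h, mul_zero]
  -- L2 : the uniform pentadiagonal vanishing
  have L2 : ∀ l m, 1 ≤ l → l ≤ N → l + 2 ≤ m → m ≤ N →
      (inner ℝ (q m) (𝒜 (q l)) : ℝ) = 0 := by
    intro l m hl1 hlN hm2 hmN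
    rcases Nat.even_or_odd l with ⟨k, hk⟩ | ⟨k, hk⟩
    · have hl : l = 2 * k := by omega
      subst hl
      exact hpent1 k m (by omega) (by omega) (by omega) hmN
    · have hl : l = 2 * k + 1 := by omega
      subst hl
      exact hpent2 k m (by omega) (by omega) hmN
  -- expansion of 𝒜 x n against q m
  have hAx : ∀ n (hn1 : 1 ≤ n) (hnN : n ≤ N) (cn : Fin n → ℝ),
      x n = ∑ j : Fin n, cn j • q ((j : ℕ) + 1) →
      ∀ m, (inner ℝ (q m) (𝒜 (x n)) : ℝ)
        = ∑ j : Fin n, (inner ℝ (q m) (𝒜 (q ((j : ℕ) + 1))) : ℝ) * cn j := by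
    intro n hn1 hnN cn hxn m
    rw [hxn, map_sum, inner_sum]
    refine Finset.sum_congr rfl fun j _ => ?_
    rw [map_smul]
    simp [real_inner_smul_right, mul_comm]
  -- Part 1
  have P1 : ∀ n, 1 ≤ n → n ≤ N → ∀ j, 1 ≤ j → j ≤ n → (inner ℝ (r n) (q j) : ℝ) = 0 := by
    intro n hn1 hnN j hj1 hjn
    obtain ⟨cn, hc, hxn⟩ := hx n hn1 hnN
    have hjN : j ≤ N := le_trans hjn hnN
    have hj : j - 1 < n := by omega
    have hc' := hc ⟨j - 1, hj⟩
    have hj1' : (⟨j - 1, hj⟩ : Fin n).1 + 1 = j := by simp; omega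
    rw [hj1'] at hc'
    rw [hr, inner_sub_left, real_inner_comm (q j) (𝒜 (x n)),
      hAx n hn1 hnN cn hxn j, hc', hbqj j hj1 hjN]
    rcases eq_or_ne j 1 with h | h
    · subst h; simp
    · have h2 : ¬ ((⟨j - 1, hj⟩ : Fin n) : ℕ) = 0 := by simp; omega
      rw [if_neg h2, if_neg h, sub_zero]
  -- L4 : components of r n above n+1 vanish
  have L4 : ∀ n, 1 ≤ n → n ≤ N → ∀ m, n + 2 ≤ m → m ≤ N →
      (inner ℝ (q m) (r n) : ℝ) = 0 := by
    intro n hn1 hnN m hm2 hmN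
    obtain ⟨cn, hc, hxn⟩ := hx n hn1 hnN
    rw [hr, inner_sub_right, hAx n hn1 hnN cn hxn m]
    have h1 : ∑ j : Fin n, (inner ℝ (q m) (𝒜 (q ((j : ℕ) + 1))) : ℝ) * cn j = 0 := by
      refine Finset.sum_eq_zero fun j _ => ?_
      rw [L2 ((j : ℕ) + 1) m (by omega) (by omega) (by omega) hmN, zero_mul]
    have h2 : (inner ℝ (q m) b : ℝ) = 0 := by
      rw [real_inner_comm, hbqj m (by omega) hmN, if_neg (by omega)]
    rw [h1, h2, sub_zero]
  -- L1 : expansion of any vector in the orthonormal spanning family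
  have L1 : ∀ v : X, v = ∑ m ∈ Finset.Icc 1 N, (inner ℝ (q m) v : ℝ) • q m := by
    intro v
    set w := v - ∑ m ∈ Finset.Icc 1 N, (inner ℝ (q m) v : ℝ) • q m with hw
    have hperp : ∀ i, 1 ≤ i → i ≤ N → (inner ℝ (q i) w : ℝ) = 0 := by
      intro i hi1 hiN
      rw [hw, inner_sub_right, inner_sum]
      have hsum : ∑ m ∈ Finset.Icc 1 N, (inner ℝ (q i) ((inner ℝ (q m) v : ℝ) • q m) : ℝ)
          = ∑ m ∈ Finset.Icc 1 N, (if i = m then (inner ℝ (q m) v : ℝ) else 0) := by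
        refine Finset.sum_congr rfl fun m hm => ?_
        obtain ⟨hm1, hmN⟩ := Finset.mem_Icc.mp hm
        rw [real_inner_smul_right, hON i m hi1 hiN hm1 hmN]
        by_cases h : i = m <;> simp [h]
      rw [hsum, Finset.sum_ite_eq, if_pos (Finset.mem_Icc.mpr ⟨hi1, hiN⟩), sub_self]
    have hall : ∀ u : X, (inner ℝ u w : ℝ) = 0 := by
      intro u
      have hu : u ∈ Submodule.span ℝ {v : X | ∃ i, 1 ≤ i ∧ i ≤ N ∧ v = q i} := by
        rw [hspan]; trivial
      induction hu using Submodule.span_induction with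
      | mem z hz =>
        obtain ⟨i, hi1, hiN, rfl⟩ := hz
        exact hperp i hi1 hiN
      | zero => simp
      | add y z _ _ hy hz => rw [inner_add_left, hy, hz, add_zero]
      | smul a y _ hy => rw [real_inner_smul_left, hy, mul_zero]
    have hw0 : w = 0 := inner_self_eq_zero.mp (hall w)
    rw [hw] at hw0
    exact sub_eq_zero.mp hw0
  -- main inner ℝ product vanishing
  have main : ∀ i j, 1 ≤ i → i ≤ N → 1 ≤ j → j ≤ N → i + 1 ≤ j →
      (inner ℝ (r i) (r j) : ℝ) = 0 := by
    intro i j hi1 hiN hj1 hjN hij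
    rw [L1 (r i), sum_inner]
    refine Finset.sum_eq_zero fun m hm => ?_
    obtain ⟨hm1, hmN⟩ := Finset.mem_Icc.mp hm
    rw [real_inner_smul_left]
    by_cases h : m ≤ j
    · rw [real_inner_comm (r j) (q m), P1 j hj1 hjN m hm1 h, mul_zero]
    · rw [L4 i hi1 hiN m (by omega) hmN, zero_mul]
  refine ⟨P1, fun i j hi1 hiN hj1 hjN hij => main i j hi1 hiN hj1 hjN (by omega),
    fun n hev hn1 hnN => main n (n + 1) hn1 (by omega) (by omega) hnN (by omega)⟩
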